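/- If (z, z') is a principal or complementary pair of complex numbers, then for every partition λ the number (z)_λ · (z')_λ := ∏_{i=1}^{l} ∏_{j=1}^{λ_i} (z + j − i)(z' + j − i) (where l is the length of λ) is a positive real number. Consequently z·z' > 0 and the z-measure weight M_{z,z',ξ}(λ) = (1−ξ)^{zz'} ξ^{|λ|} (z)_λ (z')_λ (dim λ/|λ|!)² is strictly positive for every λ and every ξ ∈ (0,1). -/

import Mathlib

/-- The product `(z)_λ · (z')_λ = ∏_{i=1}^{l} ∏_{j=1}^{λ_i} (z + j − i)(z' + j − i)`,
written with 0-based indices: rows `i ∈ {0,…,L−1}`, boxes `j ∈ {0,…,λ_i−1}`. -/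
noncomputable def pochProd (z z' : ℂ) (L : ℕ) (lam : ℕ → ℕ) : ℂ :=
  ∏ i ∈ Finset.range L, ∏ j ∈ Finset.range (lam i),
    ((z + (j : ℂ) - (i : ℂ)) * (z' + (j : ℂ) - (i : ℂ)))

lemma key_factor (z z' : ℂ)
    (hzz : (z.im ≠ 0 ∧ z' = (starRingEnd ℂ) z) ∨
      (z.im = 0 ∧ z'.im = 0 ∧
        ∃ k : ℤ, (k : ℝ) < z.re ∧ z.re < k + 1 ∧ (k : ℝ) < z'.re ∧ z'.re < k + 1))
    (m : ℤ) : ((z + m) * (z' + m)).im = 0 ∧ 0 < ((z + m) * (z' + m)).re := by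
  rcases hzz with ⟨him, rfl⟩ | ⟨hz, hz', k, h1, h2, h3, h4⟩
  · have hc : (starRingEnd ℂ) z + (m : ℂ) = (starRingEnd ℂ) (z + m) := by
      simp [map_add]
    have hne : z + (m : ℂ) ≠ 0 := by
      intro h
      have : (z + (m : ℂ)).im = 0 := by rw [h]; simp
      simp [Complex.add_im] at this
      exact him this
    rw [hc, Complex.mul_conj]
    constructor
    · simp
    · simpa using Complex.normSq_pos.2 hne
  · have him1 : (z + (m : ℂ)).im = 0 := by simp [Complex.add_im, hz]
    have him2 : (z' + (m : ℂ)).im = 0 := by simp [Complex.add_im, hz']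
    have hre : ((z + m) * (z' + m)).re = (z.re + m) * (z'.re + m) := by
      rw [Complex.mul_re, him1, him2]
      simp [Complex.add_re]
    have him : ((z + m) * (z' + m)).im = 0 := by
      rw [Complex.mul_im, him1, him2]; ring
    refine ⟨him, ?_⟩
    rw [hre]
    rcases le_or_gt 0 (k + m) with ht | ht
    · have h0 : (0 : ℝ) ≤ (k : ℝ) + (m : ℝ) := by exact_mod_cast ht
      have ha : (0:ℝ) < z.re + m := by linarith
      have hb : (0:ℝ) < z'.re + m := by linarith
      exact mul_pos ha hb
    · have ht' : (k + m : ℤ) + 1 ≤ 0 := by omega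
      have h0 : (k : ℝ) + (m : ℝ) + 1 ≤ 0 := by exact_mod_cast ht'
      have ha : z.re + m < 0 := by linarith
      have hb : z'.re + m < 0 := by linarith
      exact mul_pos_of_neg_of_neg ha hb

/-- If `(z, z')` is a principal or complementary pair, then for every partition `λ`
(weakly decreasing, vanishing from index `L` on) the number `(z)_λ·(z')_λ` is a positive
real; consequently `z·z' > 0` and the `z`-measure weight
`(1−ξ)^{zz'}·ξ^{|λ|}·(z)_λ(z')_λ·(dim λ/|λ|!)²` is strictly positive for every
`ξ ∈ (0,1)` (here `d = dim λ`, a positive integer). -/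
theorem zMeasure_weight_pos (z z' : ℂ)
    (hzz : (z.im ≠ 0 ∧ z' = (starRingEnd ℂ) z) ∨
      (z.im = 0 ∧ z'.im = 0 ∧
        ∃ k : ℤ, (k : ℝ) < z.re ∧ z.re < k + 1 ∧ (k : ℝ) < z'.re ∧ z'.re < k + 1))
    (L : ℕ) (lam : ℕ → ℕ) (hanti : Antitone lam) (hsupp : ∀ i, L ≤ i → lam i = 0) :
    (pochProd z z' L lam).im = 0 ∧ 0 < (pochProd z z' L lam).re ∧
    (z * z').im = 0 ∧ 0 < (z * z').re ∧
    ∀ ξ : ℝ, 0 < ξ → ξ < 1 → ∀ d : ℕ, 0 < d →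
      0 < Real.rpow (1 - ξ) ((z * z').re) * ξ ^ (∑ i ∈ Finset.range L, lam i)
        * (pochProd z z' L lam).re
        * ((d : ℝ) / (Nat.factorial (∑ i ∈ Finset.range L, lam i))) ^ 2 := by
  have hfac : ∀ i j : ℕ,
      ((z + (j : ℂ) - (i : ℂ)) * (z' + (j : ℂ) - (i : ℂ))).im = 0 ∧
      0 < ((z + (j : ℂ) - (i : ℂ)) * (z' + (j : ℂ) - (i : ℂ))).re := by
    intro i j
    have := key_factor z z' hzz ((j : ℤ) - (i : ℤ))
    have he : z + ((j : ℤ) - (i : ℤ) : ℤ) = z + (j : ℂ) - (i : ℂ) := by push_cast; ring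
    have he' : z' + ((j : ℤ) - (i : ℤ) : ℤ) = z' + (j : ℂ) - (i : ℂ) := by push_cast; ring
    rwa [he, he'] at this
  -- express pochProd as a real product
  have hpoch : pochProd z z' L lam =
      ((∏ i ∈ Finset.range L, ∏ j ∈ Finset.range (lam i),
        ((z + (j : ℂ) - (i : ℂ)) * (z' + (j : ℂ) - (i : ℂ))).re : ℝ) : ℂ) := by
    have hw : ∀ w : ℂ, w.im = 0 → w = (w.re : ℂ) := fun w hw =>
      Complex.ext (by simp) (by simp [hw])
    rw [pochProd, Complex.ofReal_prod]
    refine Finset.prod_congr rfl fun i _ => ?_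
    rw [Complex.ofReal_prod]
    exact Finset.prod_congr rfl fun j _ => hw _ (hfac i j).1
  have hR : 0 < ∏ i ∈ Finset.range L, ∏ j ∈ Finset.range (lam i),
      ((z + (j : ℂ) - (i : ℂ)) * (z' + (j : ℂ) - (i : ℂ))).re :=
    Finset.prod_pos fun i _ => Finset.prod_pos fun j _ => (hfac i j).2
  have h1 : (pochProd z z' L lam).im = 0 := by rw [hpoch, Complex.ofReal_im]
  have h2 : 0 < (pochProd z z' L lam).re := by rw [hpoch, Complex.ofReal_re]; exact hR
  have hzz0 := key_factor z z' hzz 0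
  simp only [Int.cast_zero, add_zero] at hzz0
  refine ⟨h1, h2, hzz0.1, hzz0.2, ?_⟩
  intro ξ hξ0 hξ1 d hd
  have hr : 0 < Real.rpow (1 - ξ) ((z * z').re) :=
    Real.rpow_pos_of_pos (by linarith) _
  have hp : 0 < ξ ^ (∑ i ∈ Finset.range L, lam i) := pow_pos hξ0 _
  have hq : 0 < ((d : ℝ) / (Nat.factorial (∑ i ∈ Finset.range L, lam i))) ^ 2 :=
    pow_pos (div_pos (by exact_mod_cast hd)
      (by exact_mod_cast Nat.factorial_pos _)) _
  exact mul_pos (mul_pos (mul_pos hr hp) h2) hq
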